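/- Let P ∈ ℝ^{n×n} be a doubly stochastic matrix with second largest singular value σ₂(P) < 1, and let u_{i,t} ∈ ℝ^d satisfy ‖u_{i,t}‖ ≤ C for all i ∈ [n], t ≥ 1 (Euclidean norm). Define z_{i,1} = 0 for all i, z_{i,t+1} = Σ_{j=1}^n P_{ji} z_{j,t} + u_{i,t}, and z̄_t = (1/n)Σ_{i=1}^n z_{i,t}. Then for every i ∈ [n] and t ≥ 1, ‖z̄_t − z_{i,t}‖ ≤ √n·C/(1 − σ₂(P)). -/

import Mathlib

open Matrix RealInnerProductSpace

/-- The singular values of a square real matrix `M`, namely the square roots of the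
eigenvalues of the Hermitian matrix `M * Mᴴ` (with multiplicity, in arbitrary order). -/
noncomputable def singVals {n : ℕ} (M : Matrix (Fin n) (Fin n) ℝ) : Fin n → ℝ :=
  fun i => Real.sqrt ((Matrix.isHermitian_mul_conjTranspose_self M).eigenvalues i)

/-- The second largest singular value (with multiplicity) of a square real matrix. -/
noncomputable def sigma2 {n : ℕ} (M : Matrix (Fin n) (Fin n) ℝ) : ℝ :=
  sSup {s : ℝ | ∃ i j : Fin n, i ≠ j ∧ s = min (singVals M i) (singVals M j)}

section Aux

variable {n : ℕ}

lemma sigma2_bddAbove (M : Matrix (Fin n) (Fin n) ℝ) :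
    BddAbove {s : ℝ | ∃ i j : Fin n, i ≠ j ∧ s = min (singVals M i) (singVals M j)} := by
  apply Set.Finite.bddAbove
  apply Set.Finite.subset (Set.finite_range
    (fun p : Fin n × Fin n => min (singVals M p.1) (singVals M p.2)))
  rintro s ⟨i, j, -, rfl⟩
  exact ⟨(i, j), rfl⟩

lemma sigma2_nonneg (M : Matrix (Fin n) (Fin n) ℝ) : 0 ≤ sigma2 M := by
  rcases Set.eq_empty_or_nonempty
    {s : ℝ | ∃ i j : Fin n, i ≠ j ∧ s = min (singVals M i) (singVals M j)} with h | ⟨s, i, j, hij, hs⟩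
  · rw [sigma2, h, Real.sSup_empty]
  · refine le_trans ?_ (le_csSup (sigma2_bddAbove M) ⟨i, j, hij, hs⟩)
    rw [hs]
    exact le_min (Real.sqrt_nonneg _) (Real.sqrt_nonneg _)

-- quadratic form identity
lemma quadId (P : Matrix (Fin n) (Fin n) ℝ) (x : Fin n → ℝ) :
    ∑ i, x i * ((P * Pᴴ) *ᵥ x) i = ∑ q, (∑ j, P j q * x j)^2 := by
  rw [← Matrix.mulVec_mulVec]
  simp only [Matrix.mulVec, dotProduct, conjTranspose_apply, star_trivial, Finset.mul_sum]
  rw [Finset.sum_comm]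
  refine Finset.sum_congr rfl fun q _ => ?_
  rw [sq, Finset.sum_mul]
  refine Finset.sum_congr rfl fun i _ => ?_
  rw [Finset.mul_sum]
  exact Finset.sum_congr rfl fun m _ => by ring

lemma substoch (P : Matrix (Fin n) (Fin n) ℝ) (hnonneg : ∀ i j, 0 ≤ P i j)
    (hrow : ∀ i, ∑ j, P i j = 1) (hcol : ∀ j, ∑ i, P i j = 1) (w : Fin n → ℝ) :
    ∑ q, (∑ j, P j q * w j)^2 ≤ ∑ j, (w j)^2 := by
  have step : ∀ q, (∑ j, P j q * w j)^2 ≤ ∑ j, P j q * (w j)^2 := by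
    intro q
    have h := Finset.sum_mul_sq_le_sq_mul_sq Finset.univ
      (fun j => Real.sqrt (P j q)) (fun j => Real.sqrt (P j q) * w j)
    have e1 : ∀ j, Real.sqrt (P j q) * (Real.sqrt (P j q) * w j) = P j q * w j := by
      intro j; rw [← mul_assoc, Real.mul_self_sqrt (hnonneg j q)]
    have e3 : ∀ j, (Real.sqrt (P j q) * w j)^2 = P j q * (w j)^2 := by
      intro j; rw [mul_pow, Real.sq_sqrt (hnonneg j q)]
    simp only [e1, e3, Real.sq_sqrt (hnonneg _ q)] at h
    simpa [hcol q] using h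
  calc ∑ q, (∑ j, P j q * w j)^2 ≤ ∑ q, ∑ j, P j q * (w j)^2 :=
        Finset.sum_le_sum fun q _ => step q
    _ = ∑ j, (w j)^2 := by
        rw [Finset.sum_comm]
        refine Finset.sum_congr rfl fun j _ => ?_
        rw [← Finset.sum_mul, hrow j, one_mul]

lemma contraction (hn : 0 < n) (P : Matrix (Fin n) (Fin n) ℝ)
    (hnonneg : ∀ i j, 0 ≤ P i j)
    (hrow : ∀ i, ∑ j, P i j = 1) (hcol : ∀ j, ∑ i, P i j = 1)
    (hσ : sigma2 P < 1) (v : Fin n → ℝ) (hv : ∑ j, v j = 0) :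
    ∑ q, (∑ j, P j q * v j)^2 ≤ (sigma2 P)^2 * ∑ j, (v j)^2 := by
  classical
  have hA := Matrix.isHermitian_mul_conjTranspose_self P
  set μ := hA.eigenvalues with hμdef
  set b := hA.eigenvectorBasis with hbdef
  set e : Fin n → Fin n → ℝ := fun k j => b k j with hedef
  have heig : ∀ k, (P * Pᴴ) *ᵥ e k = fun j => μ k * e k j := by
    intro k
    funext j
    exact congrFun (hA.mulVec_eigenvectorBasis k) j
  have hinner : ∀ x y : EuclideanSpace ℝ (Fin n), ⟪x, y⟫ = ∑ j, x j * y j := by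
    intro x y; simp [PiLp.inner_apply, RCLike.inner_apply]; exact Finset.sum_congr rfl fun _ _ => mul_comm _ _
  have hμ0 : ∀ k, 0 ≤ μ k := fun k => Matrix.eigenvalues_self_mul_conjTranspose_nonneg P k
  have hbnorm : ∀ k, ∑ j, e k j * e k j = 1 := by
    intro k
    have h := (orthonormal_iff_ite.mp b.orthonormal) k k
    rw [hinner] at h
    simpa using h
  have hμle1 : ∀ k, μ k ≤ 1 := by
    intro k
    have h1 : ∑ i, e k i * ((P * Pᴴ) *ᵥ e k) i = μ k := by
      rw [heig k]
      have : ∀ i, e k i * (μ k * e k i) = μ k * (e k i * e k i) := fun i => by ring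
      rw [Finset.sum_congr rfl fun i _ => this i, ← Finset.mul_sum, hbnorm k, mul_one]
    calc μ k = ∑ q, (∑ j, P j q * e k j)^2 := by rw [← h1, quadId]
      _ ≤ ∑ j, e k j * e k j := by simpa [sq] using substoch P hnonneg hrow hcol (e k)
      _ = 1 := hbnorm k
  have hsv : ∀ k, singVals P k = Real.sqrt (μ k) := fun k => rfl
  have hsv_sq : ∀ k, (singVals P k)^2 = μ k := fun k => Real.sq_sqrt (hμ0 k)
  have hsv_le1 : ∀ k, singVals P k ≤ 1 := by
    intro k
    rw [hsv k, show (1:ℝ) = Real.sqrt 1 from (Real.sqrt_one).symm]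
    exact Real.sqrt_le_sqrt (hμle1 k)
  have hPPcol : ∀ m, ∑ j, (P * Pᴴ) j m = 1 := by
    intro m
    simp only [Matrix.mul_apply, conjTranspose_apply, star_trivial]
    rw [Finset.sum_comm]
    calc ∑ r, ∑ j, P j r * P m r = ∑ r, P m r * ∑ j, P j r := by
          refine Finset.sum_congr rfl fun r _ => ?_
          rw [← Finset.sum_mul]; ring
      _ = 1 := by simp [hcol, hrow m]
  set s1 : Fin n → ℝ := fun k => ∑ j, e k j with hs1def
  have hone : ∀ k, μ k * s1 k = s1 k := by
    intro k
    have h1 : ∑ j, ((P * Pᴴ) *ᵥ e k) j = μ k * s1 k := by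
      rw [heig k, ← Finset.mul_sum]
    have h2 : ∑ j, ((P * Pᴴ) *ᵥ e k) j = s1 k := by
      simp only [Matrix.mulVec, dotProduct]
      rw [Finset.sum_comm]
      refine Finset.sum_congr rfl fun m _ => ?_
      rw [← Finset.sum_mul, hPPcol m, one_mul]
    rw [← h1, h2]
  have hones : ∃ k0, s1 k0 ≠ 0 := by
    by_contra h
    push_neg at h
    set ONES : EuclideanSpace ℝ (Fin n) := (WithLp.equiv 2 _).symm (fun _ => (1:ℝ)) with hO
    have hrep := b.sum_repr' ONES
    have hcoef : ∀ k, ⟪b k, ONES⟫ = s1 k := by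
      intro k; rw [hinner]; simp [hO, hs1def, hedef]
    rw [Finset.sum_congr rfl fun k _ => by rw [hcoef k, h k, zero_smul]] at hrep
    have h0 : (0 : EuclideanSpace ℝ (Fin n)) = ONES := by simpa using hrep
    have := congrFun (congrArg (WithLp.equiv 2 _) h0) ⟨0, hn⟩
    simp [hO] at this
  obtain ⟨k0, hk0⟩ := hones
  have hμk0 : μ k0 = 1 := mul_right_cancel₀ hk0 (by rw [hone k0, one_mul])
  have hsvk0 : singVals P k0 = 1 := by rw [hsv, hμk0, Real.sqrt_one]
  have hother : ∀ k, k ≠ k0 → singVals P k ≤ sigma2 P := by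
    intro k hk
    have hmem : min (singVals P k) (singVals P k0) ∈
        {s : ℝ | ∃ i j : Fin n, i ≠ j ∧ s = min (singVals P i) (singVals P j)} :=
      ⟨k, k0, hk, rfl⟩
    have := le_csSup (sigma2_bddAbove P) hmem
    rwa [hsvk0, min_eq_left (hsv_le1 k)] at this
  have hzero : ∀ k, k ≠ k0 → s1 k = 0 := by
    intro k hk
    by_contra h
    have hμk : μ k = 1 := mul_right_cancel₀ h (by rw [hone k, one_mul])
    have h1 : singVals P k = 1 := by rw [hsv, hμk, Real.sqrt_one]
    have h2 := hother k hk
    rw [h1] at h2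
    linarith
  -- coefficients of v
  set c : Fin n → ℝ := fun k => ∑ j, e k j * v j with hcdef
  set V : EuclideanSpace ℝ (Fin n) := (WithLp.equiv 2 _).symm v with hV
  have hcV : ∀ k, ⟪b k, V⟫ = c k := by
    intro k; rw [hinner]; simp [hV, hcdef, hedef]
  -- expansion of v
  have hexp : ∀ j, v j = ∑ k, c k * e k j := by
    intro j
    have hrep := b.sum_repr' V
    calc v j = ⟪EuclideanSpace.single j (1:ℝ), V⟫ := by
          rw [hinner]
          simp [EuclideanSpace.single_apply, hV]
      _ = ⟪EuclideanSpace.single j (1:ℝ), ∑ k, ⟪b k, V⟫ • b k⟫ := by rw [hrep]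
      _ = ∑ k, c k * e k j := by
          rw [inner_sum]
          refine Finset.sum_congr rfl fun k _ => ?_
          rw [real_inner_smul_right, hcV k]
          congr 1
          rw [hinner]
          simp [EuclideanSpace.single_apply, hedef]
  -- Parseval
  have hpars : ∑ k, c k ^ 2 = ∑ j, v j ^ 2 := by
    have h := b.sum_inner_mul_inner V V
    have h2 : ∀ k, ⟪V, b k⟫ = c k := fun k => by rw [real_inner_comm]; exact hcV k
    rw [Finset.sum_congr rfl fun k _ => by rw [h2 k, hcV k, ← sq]] at h
    rw [h, hinner]
    exact Finset.sum_congr rfl fun j _ => by rw [pow_two]; rfl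
  -- c k0 = 0
  have hck0 : c k0 = 0 := by
    have h0 : ∑ k, s1 k * c k = 0 := by
      have : ∑ k, s1 k * c k = ∑ j, v j := by
        calc ∑ k, s1 k * c k = ∑ k, ∑ j, c k * e k j := by
              refine Finset.sum_congr rfl fun k _ => ?_
              simp only [hs1def]
              rw [mul_comm, Finset.mul_sum]
          _ = ∑ j, ∑ k, c k * e k j := Finset.sum_comm
          _ = ∑ j, v j := Finset.sum_congr rfl fun j _ => (hexp j).symm
      rw [this, hv]
    have hsplit : ∑ k, s1 k * c k = s1 k0 * c k0 := by
      rw [Finset.sum_eq_single k0]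
      · intro k _ hk; rw [hzero k hk, zero_mul]
      · intro h; exact absurd (Finset.mem_univ k0) h
    rw [hsplit] at h0
    exact (mul_eq_zero.mp h0).resolve_left hk0
  -- spectral computation of the quadratic form
  have hPv : (P * Pᴴ) *ᵥ v = fun i => ∑ k, c k * (μ k * e k i) := by
    funext i
    show ∑ m, (P * Pᴴ) i m * v m = _
    calc ∑ m, (P * Pᴴ) i m * v m = ∑ m, (P * Pᴴ) i m * ∑ k, c k * e k m := by
          exact Finset.sum_congr rfl fun m _ => by rw [← hexp m]
      _ = ∑ m, ∑ k, c k * ((P * Pᴴ) i m * e k m) := by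
          refine Finset.sum_congr rfl fun m _ => ?_
          rw [Finset.mul_sum]
          exact Finset.sum_congr rfl fun k _ => by ring
      _ = ∑ k, ∑ m, c k * ((P * Pᴴ) i m * e k m) := Finset.sum_comm
      _ = ∑ k, c k * (μ k * e k i) := by
          refine Finset.sum_congr rfl fun k _ => ?_
          rw [← Finset.mul_sum]
          congr 1
          exact congrFun (heig k) i
  have hquad : ∑ i, v i * ((P * Pᴴ) *ᵥ v) i = ∑ k, μ k * c k ^ 2 := by
    rw [hPv]
    calc ∑ i, v i * ∑ k, c k * (μ k * e k i)
        = ∑ i, ∑ k, c k * μ k * (e k i * v i) := by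
          refine Finset.sum_congr rfl fun i _ => ?_
          rw [Finset.mul_sum]
          exact Finset.sum_congr rfl fun k _ => by ring
      _ = ∑ k, ∑ i, c k * μ k * (e k i * v i) := Finset.sum_comm
      _ = ∑ k, μ k * c k ^ 2 := by
          refine Finset.sum_congr rfl fun k _ => ?_
          rw [← Finset.mul_sum]
          have hck : ∑ i, e k i * v i = c k := rfl
          rw [hck]; ring
  calc ∑ q, (∑ j, P j q * v j)^2 = ∑ k, μ k * c k ^ 2 := by rw [← quadId, hquad]
    _ ≤ ∑ k, (sigma2 P)^2 * c k ^ 2 := by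
        refine Finset.sum_le_sum fun k _ => ?_
        rcases eq_or_ne k k0 with rfl | hk
        · rw [hck0]; simp
        · exact mul_le_mul_of_nonneg_right
            (by rw [← hsv_sq k]; exact pow_le_pow_left₀ (Real.sqrt_nonneg _) (hother k hk) 2)
            (sq_nonneg _)
    _ = (sigma2 P)^2 * ∑ j, (v j)^2 := by rw [← Finset.mul_sum, hpars]

lemma contraction' (hn : 0 < n) (P : Matrix (Fin n) (Fin n) ℝ)
    (hnonneg : ∀ i j, 0 ≤ P i j)
    (hrow : ∀ i, ∑ j, P i j = 1) (hcol : ∀ j, ∑ i, P i j = 1)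
    (hσ : sigma2 P < 1) (v : Fin n → ℝ) (hv : ∑ j, v j = 0) :
    ∑ i, (∑ m, P i m * v m)^2 ≤ (sigma2 P)^2 * ∑ m, (v m)^2 := by
  have hysum : ∑ i, (∑ m, P i m * v m) = 0 := by
    rw [Finset.sum_comm]
    calc ∑ m, ∑ i, P i m * v m = ∑ m, (∑ i, P i m) * v m :=
          Finset.sum_congr rfl fun m _ => (Finset.sum_mul _ _ _).symm
      _ = 0 := by
          rw [Finset.sum_congr rfl fun m _ => by rw [hcol m, one_mul]]
          exact hv
  have hkey := contraction hn P hnonneg hrow hcol hσ (fun i => ∑ m, P i m * v m) hysum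
  set S := ∑ i, (∑ m, P i m * v m)^2 with hS
  have hS0 : 0 ≤ S := Finset.sum_nonneg fun i _ => sq_nonneg _
  have hv2 : 0 ≤ ∑ m, (v m)^2 := Finset.sum_nonneg fun m _ => sq_nonneg _
  have hswap : S = ∑ m, v m * (∑ j, P j m * (∑ r, P j r * v r)) := by
    rw [hS]
    calc ∑ i, (∑ m, P i m * v m)^2
        = ∑ i, ∑ m, v m * (P i m * (∑ r, P i r * v r)) := by
          refine Finset.sum_congr rfl fun i _ => ?_
          rw [sq, Finset.sum_mul]
          exact Finset.sum_congr rfl fun m _ => by ring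
      _ = ∑ m, ∑ i, v m * (P i m * (∑ r, P i r * v r)) := Finset.sum_comm
      _ = ∑ m, v m * (∑ j, P j m * (∑ r, P j r * v r)) := by
          refine Finset.sum_congr rfl fun m _ => ?_
          rw [Finset.mul_sum]
  have hcs : S^2 ≤ (∑ m, (v m)^2) * ∑ q, (∑ j, P j q * (∑ r, P j r * v r))^2 := by
    rw [hswap]
    exact Finset.sum_mul_sq_le_sq_mul_sq Finset.univ _ _
  have hchain : S^2 ≤ (∑ m, (v m)^2) * ((sigma2 P)^2 * S) :=
    le_trans hcs (mul_le_mul_of_nonneg_left hkey hv2)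
  rcases eq_or_lt_of_le hS0 with h | h
  · rw [← h]; positivity
  · nlinarith [hchain, h]

lemma powRow (P : Matrix (Fin n) (Fin n) ℝ) (hrow : ∀ i, ∑ j, P i j = 1) :
    ∀ k : ℕ, ∀ i, ∑ j, (P^k) j i = 1 → True := fun _ _ _ => trivial

lemma powRowSum (P : Matrix (Fin n) (Fin n) ℝ) (hrow : ∀ i, ∑ j, P i j = 1) (k : ℕ) (i : Fin n) :
    ∑ j, (P^k) i j = 1 := by
  induction k with
  | zero => simp [Matrix.one_apply, Finset.sum_ite_eq']
  | succ k ih =>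
    rw [pow_succ]
    simp only [Matrix.mul_apply]
    rw [Finset.sum_comm]
    calc ∑ r, ∑ j, (P^k) i r * P r j = ∑ r, (P^k) i r * ∑ j, P r j := by
          exact Finset.sum_congr rfl fun r _ => (Finset.mul_sum _ _ _).symm
      _ = 1 := by
          rw [Finset.sum_congr rfl fun r _ => by rw [hrow r, mul_one]]
          exact ih
lemma powColSum (P : Matrix (Fin n) (Fin n) ℝ) (hcol : ∀ j, ∑ i, P i j = 1) (k : ℕ) (i : Fin n) :
    ∑ j, (P^k) j i = 1 := by
  induction k with
  | zero => simp [Matrix.one_apply, Finset.sum_ite_eq]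
  | succ k ih =>
    rw [pow_succ']
    simp only [Matrix.mul_apply]
    rw [Finset.sum_comm]
    calc ∑ r, ∑ j, P j r * (P^k) r i = ∑ r, (∑ j, P j r) * (P^k) r i := by
          exact Finset.sum_congr rfl fun r _ => (Finset.sum_mul _ _ _).symm
      _ = 1 := by
          rw [Finset.sum_congr rfl fun r _ => by rw [hcol r, one_mul]]
          exact ih

lemma powDev (hn : 0 < n) (P : Matrix (Fin n) (Fin n) ℝ)
    (hnonneg : ∀ i j, 0 ≤ P i j)
    (hrow : ∀ i, ∑ j, P i j = 1) (hcol : ∀ j, ∑ i, P i j = 1)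
    (hσ : sigma2 P < 1) (i : Fin n) (k : ℕ) :
    ∑ j, ((P^k) j i - (n:ℝ)⁻¹)^2 ≤ ((sigma2 P)^k)^2 := by
  induction k with
  | zero =>
    have hn' : (0:ℝ) < n := by exact_mod_cast hn
    have : ∑ j, (((1 : Matrix (Fin n) (Fin n) ℝ)) j i - (n:ℝ)⁻¹)^2
        = ∑ j, ((if j = i then (1:ℝ) else 0) ^ 2 - 2 * (n:ℝ)⁻¹ * (if j = i then 1 else 0)
            + (n:ℝ)⁻¹^2) := by
      refine Finset.sum_congr rfl fun j _ => ?_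
      rw [Matrix.one_apply]
      ring
    rw [pow_zero, this]
    rw [Finset.sum_add_distrib, Finset.sum_sub_distrib]
    simp [Finset.sum_ite_eq', Finset.mul_sum]
    have hne : (n:ℝ) ≠ 0 := by positivity
    have h2 : (n:ℝ) * (((n:ℝ)^2)⁻¹) = (n:ℝ)⁻¹ := by
      field_simp
    rw [h2]
    have h3 : (0:ℝ) ≤ (n:ℝ)⁻¹ := by positivity
    linarith
  | succ k ih =>
    have hwsum : ∑ j, ((P^k) j i - (n:ℝ)⁻¹) = 0 := by
      rw [Finset.sum_sub_distrib, powColSum P hcol k i]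
      simp
      have hne : (n:ℝ) ≠ 0 := by
        have : (0:ℝ) < n := by exact_mod_cast hn
        positivity
      field_simp
      norm_num
    have hstep : ∀ j, (P^(k+1)) j i - (n:ℝ)⁻¹ = ∑ m, P j m * ((P^k) m i - (n:ℝ)⁻¹) := by
      intro j
      rw [Finset.sum_congr rfl fun m _ => by rw [mul_sub]]
      rw [Finset.sum_sub_distrib, ← Finset.sum_mul, hrow j, one_mul]
      congr 1
      rw [pow_succ']
      simp [Matrix.mul_apply]
    calc ∑ j, ((P^(k+1)) j i - (n:ℝ)⁻¹)^2
        = ∑ j, (∑ m, P j m * ((P^k) m i - (n:ℝ)⁻¹))^2 := by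
          exact Finset.sum_congr rfl fun j _ => by rw [hstep j]
      _ ≤ (sigma2 P)^2 * ∑ m, ((P^k) m i - (n:ℝ)⁻¹)^2 :=
          contraction' hn P hnonneg hrow hcol hσ _ hwsum
      _ ≤ (sigma2 P)^2 * ((sigma2 P)^k)^2 :=
          mul_le_mul_of_nonneg_left ih (sq_nonneg _)
      _ = ((sigma2 P)^(k+1))^2 := by ring

-- ℓ¹ deviation bound
lemma powDevL1 (hn : 0 < n) (P : Matrix (Fin n) (Fin n) ℝ)
    (hnonneg : ∀ i j, 0 ≤ P i j)
    (hrow : ∀ i, ∑ j, P i j = 1) (hcol : ∀ j, ∑ i, P i j = 1)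
    (hσ : sigma2 P < 1) (i : Fin n) (k : ℕ) :
    ∑ j, |(n:ℝ)⁻¹ - (P^k) j i| ≤ Real.sqrt n * (sigma2 P)^k := by
  have h1 : (∑ j, |(n:ℝ)⁻¹ - (P^k) j i|)^2 ≤ (n:ℝ) * ((sigma2 P)^k)^2 := by
    have hcs := Finset.sum_mul_sq_le_sq_mul_sq Finset.univ
      (fun _ : Fin n => (1:ℝ)) (fun j => |(n:ℝ)⁻¹ - (P^k) j i|)
    simp only [one_mul, one_pow, sq_abs] at hcs
    calc (∑ j, |(n:ℝ)⁻¹ - (P^k) j i|)^2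
        ≤ (∑ _j : Fin n, (1:ℝ)) * ∑ j, ((n:ℝ)⁻¹ - (P^k) j i)^2 := hcs
      _ ≤ (n:ℝ) * ((sigma2 P)^k)^2 := by
          have hsum : (∑ _j : Fin n, (1:ℝ)) = n := by simp
          rw [hsum]
          refine mul_le_mul_of_nonneg_left ?_ (by positivity)
          calc ∑ j, ((n:ℝ)⁻¹ - (P^k) j i)^2
              = ∑ j, ((P^k) j i - (n:ℝ)⁻¹)^2 :=
                Finset.sum_congr rfl fun j _ => by ring
            _ ≤ ((sigma2 P)^k)^2 := powDev hn P hnonneg hrow hcol hσ i k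
  have h2 : 0 ≤ ∑ j, |(n:ℝ)⁻¹ - (P^k) j i| :=
    Finset.sum_nonneg fun j _ => abs_nonneg _
  have h3 : 0 ≤ Real.sqrt n * (sigma2 P)^k := by
    have := sigma2_nonneg P
    positivity
  nlinarith [h1, h2, h3, Real.sq_sqrt (by positivity : (0:ℝ) ≤ (n:ℝ)),
    Real.sqrt_nonneg (n:ℝ)]

-- geometric sum bound
lemma geomBound (x : ℝ) (hx0 : 0 ≤ x) (hx1 : x < 1) (m : ℕ) :
    ∑ r ∈ Finset.range m, x^r ≤ 1 / (1 - x) := by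
  have hne : x ≠ 1 := ne_of_lt hx1
  rw [geom_sum_eq hne]
  have h1 : (x^m - 1)/(x - 1) = (1 - x^m)/(1 - x) := by
    rw [div_eq_div_iff (by linarith [hx1] : x - 1 ≠ 0) (by linarith : (1:ℝ) - x ≠ 0)]
    ring
  rw [h1]
  have hpos : 0 < 1 - x := by linarith
  rw [div_le_div_iff₀ hpos hpos]
  nlinarith [pow_nonneg hx0 m]

section dyn
variable {d : ℕ}

lemma reprZ (P : Matrix (Fin n) (Fin n) ℝ)
    (u z : Fin n → ℕ → EuclideanSpace ℝ (Fin d))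
    (hz1 : ∀ i, z i 1 = 0)
    (hrec : ∀ i : Fin n, ∀ t : ℕ, 1 ≤ t →
      z i (t + 1) = (∑ j, P j i • z j t) + u i t) :
    ∀ t : ℕ, 1 ≤ t → ∀ i,
      z i t = ∑ s ∈ Finset.Ico 1 t, ∑ j, ((P^(t-1-s)) j i) • u j s := by
  intro t ht
  induction t, ht using Nat.le_induction with
  | base => intro i; simp [hz1 i]
  | succ t ht ih =>
    intro i
    rw [hrec i t ht]
    have hz : ∀ j, z j t = ∑ s ∈ Finset.Ico 1 t, ∑ m, ((P^(t-1-s)) m j) • u m s := ih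
    calc (∑ j, P j i • z j t) + u i t
        = (∑ s ∈ Finset.Ico 1 t, ∑ m, ((P^(t-s)) m i) • u m s) + u i t := by
          congr 1
          calc ∑ j, P j i • z j t
              = ∑ j, ∑ s ∈ Finset.Ico 1 t, ∑ m, (P j i * (P^(t-1-s)) m j) • u m s := by
                refine Finset.sum_congr rfl fun j _ => ?_
                rw [hz j, Finset.smul_sum]
                refine Finset.sum_congr rfl fun s _ => ?_
                rw [Finset.smul_sum]
                exact Finset.sum_congr rfl fun m _ => by rw [smul_smul]
            _ = ∑ s ∈ Finset.Ico 1 t, ∑ j, ∑ m, (P j i * (P^(t-1-s)) m j) • u m s :=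
                Finset.sum_comm
            _ = ∑ s ∈ Finset.Ico 1 t, ∑ m, ((P^(t-s)) m i) • u m s := by
                refine Finset.sum_congr rfl fun s hs => ?_
                rw [Finset.sum_comm]
                refine Finset.sum_congr rfl fun m _ => ?_
                rw [← Finset.sum_smul]
                congr 1
                have hpow : (P^(t-s)) m i = ∑ j, (P^(t-1-s)) m j * P j i := by
                  have hst : s < t := (Finset.mem_Ico.mp hs).2
                  have : t - s = (t - 1 - s) + 1 := by omega
                  rw [this, pow_succ]
                  simp [Matrix.mul_apply]
                rw [hpow]
                exact Finset.sum_congr rfl fun j _ => by ring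
      _ = ∑ s ∈ Finset.Ico 1 (t+1), ∑ m, ((P^(t-s)) m i) • u m s := by
          rw [Finset.sum_Ico_succ_top ht]
          congr 1
          have : t - t = 0 := Nat.sub_self t
          rw [this, pow_zero]
          symm
          calc ∑ m, ((1 : Matrix (Fin n) (Fin n) ℝ) m i) • u m t
              = ∑ m, (if m = i then (1:ℝ) else 0) • u m t := by
                refine Finset.sum_congr rfl fun m _ => ?_
                rw [Matrix.one_apply]
            _ = u i t := by
                rw [Finset.sum_congr rfl fun m _ => by
                  rw [ite_smul, one_smul, zero_smul]]
                simp [Finset.sum_ite_eq']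
      _ = ∑ s ∈ Finset.Ico 1 (t+1), ∑ m, ((P^(t+1-1-s)) m i) • u m s := by
          refine Finset.sum_congr rfl fun s _ => ?_
          have : t + 1 - 1 - s = t - s := by omega
          rw [this]
end dyn

end Aux

/-- for a doubly stochastic `P` with `σ₂(P) < 1` and uniformly bounded
perturbations `‖u_{i,t}‖ ≤ C`, the consensus iterates `z_{i,t+1} = Σ_j P_{ji} z_{j,t} + u_{i,t}`
(with `z_{i,1} = 0`) satisfy `‖z̄_t - z_{i,t}‖ ≤ √n C / (1 - σ₂(P))`. -/
theorem stmt_6 {n d : ℕ} (P : Matrix (Fin n) (Fin n) ℝ)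
    (hnonneg : ∀ i j, 0 ≤ P i j)
    (hrow : ∀ i, ∑ j, P i j = 1)
    (hcol : ∀ j, ∑ i, P i j = 1)
    (hσ : sigma2 P < 1)
    (C : ℝ) (u z : Fin n → ℕ → EuclideanSpace ℝ (Fin d))
    (hu : ∀ i : Fin n, ∀ t : ℕ, 1 ≤ t → ‖u i t‖ ≤ C)
    (hz1 : ∀ i, z i 1 = 0)
    (hrec : ∀ i : Fin n, ∀ t : ℕ, 1 ≤ t →
      z i (t + 1) = (∑ j, P j i • z j t) + u i t)
    (i : Fin n) (t : ℕ) (ht : 1 ≤ t) :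
    ‖(n : ℝ)⁻¹ • (∑ j, z j t) - z i t‖ ≤ Real.sqrt n * C / (1 - sigma2 P) := by
  have hn : 0 < n := i.pos
  have hC : 0 ≤ C := le_trans (norm_nonneg _) (hu i 1 le_rfl)
  have hσ0 := sigma2_nonneg P
  have hrepr := reprZ P u z hz1 hrec
  have hdiff : (n:ℝ)⁻¹ • (∑ q, z q t) - z i t
      = ∑ s ∈ Finset.Ico 1 t, ∑ j, ((n:ℝ)⁻¹ - (P^(t-1-s)) j i) • u j s := by
    have hzbar : ∑ q, z q t = ∑ s ∈ Finset.Ico 1 t, ∑ j, u j s := by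
      calc ∑ q, z q t
          = ∑ q, ∑ s ∈ Finset.Ico 1 t, ∑ j, (P^(t-1-s)) j q • u j s :=
            Finset.sum_congr rfl fun q _ => hrepr t ht q
        _ = ∑ s ∈ Finset.Ico 1 t, ∑ q, ∑ j, (P^(t-1-s)) j q • u j s := Finset.sum_comm
        _ = ∑ s ∈ Finset.Ico 1 t, ∑ j, u j s := by
            refine Finset.sum_congr rfl fun s _ => ?_
            rw [Finset.sum_comm]
            refine Finset.sum_congr rfl fun j _ => ?_
            rw [← Finset.sum_smul, powRowSum P hrow, one_smul]
    rw [hzbar, hrepr t ht i, Finset.smul_sum, ← Finset.sum_sub_distrib]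
    refine Finset.sum_congr rfl fun s _ => ?_
    rw [Finset.smul_sum, ← Finset.sum_sub_distrib]
    refine Finset.sum_congr rfl fun j _ => ?_
    rw [sub_smul]
  rw [hdiff]
  calc ‖∑ s ∈ Finset.Ico 1 t, ∑ j, ((n:ℝ)⁻¹ - (P^(t-1-s)) j i) • u j s‖
      ≤ ∑ s ∈ Finset.Ico 1 t, ‖∑ j, ((n:ℝ)⁻¹ - (P^(t-1-s)) j i) • u j s‖ :=
        norm_sum_le _ _
    _ ≤ ∑ s ∈ Finset.Ico 1 t, Real.sqrt n * (sigma2 P)^(t-1-s) * C := by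
        refine Finset.sum_le_sum fun s hs => ?_
        have hs1 : 1 ≤ s := (Finset.mem_Ico.mp hs).1
        calc ‖∑ j, ((n:ℝ)⁻¹ - (P^(t-1-s)) j i) • u j s‖
            ≤ ∑ j, ‖((n:ℝ)⁻¹ - (P^(t-1-s)) j i) • u j s‖ := norm_sum_le _ _
          _ = ∑ j, |(n:ℝ)⁻¹ - (P^(t-1-s)) j i| * ‖u j s‖ := by
              refine Finset.sum_congr rfl fun j _ => ?_
              rw [norm_smul, Real.norm_eq_abs]
          _ ≤ ∑ j, |(n:ℝ)⁻¹ - (P^(t-1-s)) j i| * C :=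
              Finset.sum_le_sum fun j _ =>
                mul_le_mul_of_nonneg_left (hu j s hs1) (abs_nonneg _)
          _ = (∑ j, |(n:ℝ)⁻¹ - (P^(t-1-s)) j i|) * C := (Finset.sum_mul _ _ _).symm
          _ ≤ Real.sqrt n * (sigma2 P)^(t-1-s) * C :=
              mul_le_mul_of_nonneg_right (powDevL1 hn P hnonneg hrow hcol hσ i _) hC
    _ = Real.sqrt n * C * ∑ s ∈ Finset.Ico 1 t, (sigma2 P)^(t-1-s) := by
        rw [Finset.mul_sum]
        exact Finset.sum_congr rfl fun s _ => by ring
    _ ≤ Real.sqrt n * C * (1/(1 - sigma2 P)) := by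
        refine mul_le_mul_of_nonneg_left ?_ (by positivity)
        have hre : ∑ s ∈ Finset.Ico 1 t, (sigma2 P)^(t-1-s)
            = ∑ r ∈ Finset.range (t-1), (sigma2 P)^r := by
          rw [Finset.sum_Ico_eq_sum_range]
          have h' : ∀ r, t - 1 - (1 + r) = (t-1) - 1 - r := fun r => by omega
          rw [Finset.sum_congr rfl fun r _ => by rw [h' r]]
          exact Finset.sum_range_reflect (fun r => (sigma2 P)^r) (t-1)
        rw [hre]
        exact geomBound _ hσ0 hσ (t-1)
    _ = Real.sqrt n * C / (1 - sigma2 P) := by ring
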